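/- Let ρ satisfy (A3), let 0 < ε < b < 1, and let H = (1−ε)H₀ + εH* ∈ V_ε under the Gaussian model. Define the S-scale σ_S(H) = inf{ σ > 0 : there exist α ∈ ℝ and θ ∈ ℝ^p with ∫ ρ((y − α − x'θ)/σ) dH(y,x) ≤ b }. Then γ_{b,ε} ≤ σ_S(H) ≤ σ_{b,ε}. -/

import Mathlib

open MeasureTheory ProbabilityTheory Filter Set

noncomputable instance : NullSingletonClass (gaussianReal 0 1) :=
  ⟨fun x => (gaussianReal_absolutelyContinuous 0 one_ne_zero) (Real.volume_singleton)⟩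

lemma pdf_mono {x y : ℝ} (h : x ^ 2 ≤ y ^ 2) : gaussianPDF 0 1 y ≤ gaussianPDF 0 1 x := by
  unfold gaussianPDF
  apply ENNReal.ofReal_le_ofReal
  unfold gaussianPDFReal
  apply mul_le_mul_of_nonneg_left _ (by positivity)
  apply Real.exp_le_exp.mpr
  simp only [sub_zero, NNReal.coe_one, mul_one]
  nlinarith

lemma gauss_trans (u v d : ℝ) (h : ∀ x ∈ Set.Ioc u v, x ^ 2 ≤ (x + d) ^ 2) :
    gaussianReal 0 1 (Set.Ioc (u + d) (v + d)) ≤ gaussianReal 0 1 (Set.Ioc u v) := by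
  rw [gaussianReal_apply _ one_ne_zero, gaussianReal_apply _ one_ne_zero]
  have hmp : MeasurePreserving (fun x : ℝ => x + d) volume volume :=
    measurePreserving_add_right volume d
  have hpre : (fun x : ℝ => x + d) ⁻¹' Set.Ioc (u + d) (v + d) = Set.Ioc u v := by
    rw [Set.preimage_add_const_Ioc]; simp
  have hkey := hmp.setLIntegral_comp_preimage_emb
      (MeasurableEquiv.addRight d).measurableEmbedding (gaussianPDF 0 1)
      (Set.Ioc (u + d) (v + d))
  rw [hpre] at hkey
  rw [← hkey]
  exact setLIntegral_mono' measurableSet_Ioc (fun x hx => pdf_mono (h x hx))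

lemma gauss_interval (a c : ℝ) (ha : 0 ≤ a) :
    gaussianReal 0 1 (Set.Icc (c - a) (c + a)) ≤ gaussianReal 0 1 (Set.Ioo (-a) a) := by
  set μ0 := gaussianReal 0 1 with hμ0
  have hIcc : μ0 (Set.Icc (c - a) (c + a)) = μ0 (Set.Ioc (c - a) (c + a)) :=
    (measure_congr (Ioc_ae_eq_Icc (μ := μ0))).symm
  have hIoo : μ0 (Set.Ioo (-a) a) = μ0 (Set.Ioc (-a) a) :=
    measure_congr (Ioo_ae_eq_Ioc (μ := μ0))
  rw [hIcc, hIoo]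
  rcases le_or_gt 0 c with hc | hc
  · have key : μ0 (Set.Ioc a (c + a)) ≤ μ0 (Set.Ioc (-a) (c - a)) := by
      have := gauss_trans (-a) (c - a) (2 * a) (by
        intro x hx
        have hx1 := hx.1
        nlinarith)
      convert this using 2 <;> ring
    have h1 : μ0 (Set.Ioc (-a) a) + μ0 (Set.Ioc a (c + a))
        = μ0 (Set.Ioc (-a) (c - a)) + μ0 (Set.Ioc (c - a) (c + a)) := by
      rw [← measure_union (Set.Ioc_disjoint_Ioc_of_le le_rfl) measurableSet_Ioc,
          ← measure_union (Set.Ioc_disjoint_Ioc_of_le le_rfl) measurableSet_Ioc,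
          Set.Ioc_union_Ioc_eq_Ioc (by linarith) (by linarith),
          Set.Ioc_union_Ioc_eq_Ioc (by linarith) (by linarith)]
    have hfin : μ0 (Set.Ioc a (c + a)) ≠ ⊤ := measure_ne_top _ _
    have : μ0 (Set.Ioc a (c + a)) + μ0 (Set.Ioc (c - a) (c + a))
        ≤ μ0 (Set.Ioc a (c + a)) + μ0 (Set.Ioc (-a) a) := by
      calc μ0 (Set.Ioc a (c + a)) + μ0 (Set.Ioc (c - a) (c + a))
          ≤ μ0 (Set.Ioc (-a) (c - a)) + μ0 (Set.Ioc (c - a) (c + a)) := by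
            exact add_le_add_left key _
        _ = μ0 (Set.Ioc (-a) a) + μ0 (Set.Ioc a (c + a)) := h1.symm
        _ = μ0 (Set.Ioc a (c + a)) + μ0 (Set.Ioc (-a) a) := by rw [add_comm]
    exact (ENNReal.add_le_add_iff_left hfin).mp this
  · have key : μ0 (Set.Ioc (c - a) (-a)) ≤ μ0 (Set.Ioc (c + a) a) := by
      have := gauss_trans (c + a) a (-(2 * a)) (by
        intro x hx
        have hx2 := hx.2
        nlinarith)
      convert this using 2 <;> ring
    have h1 : μ0 (Set.Ioc (c - a) (c + a)) + μ0 (Set.Ioc (c + a) a)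
        = μ0 (Set.Ioc (c - a) (-a)) + μ0 (Set.Ioc (-a) a) := by
      rw [← measure_union (Set.Ioc_disjoint_Ioc_of_le le_rfl) measurableSet_Ioc,
          ← measure_union (Set.Ioc_disjoint_Ioc_of_le le_rfl) measurableSet_Ioc,
          Set.Ioc_union_Ioc_eq_Ioc (by linarith) (by linarith),
          Set.Ioc_union_Ioc_eq_Ioc (by linarith) (by linarith)]
    have hfin : μ0 (Set.Ioc (c + a) a) ≠ ⊤ := measure_ne_top _ _
    have : μ0 (Set.Ioc (c + a) a) + μ0 (Set.Ioc (c - a) (c + a))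
        ≤ μ0 (Set.Ioc (c + a) a) + μ0 (Set.Ioc (-a) a) := by
      calc μ0 (Set.Ioc (c + a) a) + μ0 (Set.Ioc (c - a) (c + a))
          = μ0 (Set.Ioc (c - a) (c + a)) + μ0 (Set.Ioc (c + a) a) := by rw [add_comm]
        _ = μ0 (Set.Ioc (c - a) (-a)) + μ0 (Set.Ioc (-a) a) := h1
        _ ≤ μ0 (Set.Ioc (c + a) a) + μ0 (Set.Ioc (-a) a) := add_le_add_left key _
    exact (ENNReal.add_le_add_iff_left hfin).mp this
section RhoLemmas

variable {ρ : ℝ → ℝ}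

lemma rho_abs (hρ_even : ∀ u, ρ (-u) = ρ u) (u : ℝ) : ρ u = ρ |u| := by
  rcases le_or_gt 0 u with h | h
  · rw [abs_of_nonneg h]
  · rw [abs_of_neg h, hρ_even]

lemma rho_le (hρ_even : ∀ u, ρ (-u) = ρ u) (hρ_mono : MonotoneOn ρ (Set.Ici 0))
    {u v : ℝ} (h : |u| ≤ |v|) : ρ u ≤ ρ v := by
  rw [rho_abs hρ_even u, rho_abs hρ_even v]
  exact hρ_mono (abs_nonneg u) (abs_nonneg v) h

lemma levelset_le (hρ_even : ∀ u, ρ (-u) = ρ u) (hρ_mono : MonotoneOn ρ (Set.Ici 0))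
    (hρ_lim : Filter.Tendsto ρ Filter.atTop (nhds 1))
    (s c t : ℝ) (hs : 0 < s) (ht1 : t < 1) :
    gaussianReal 0 1 {z | t < ρ (z / s)} ≤ gaussianReal 0 1 {z | t < ρ ((z - c) / s)} := by
  set μ0 := gaussianReal 0 1 with hμ0
  set A : Set ℝ := {u : ℝ | 0 ≤ u ∧ t < ρ u} with hA_def
  have hA : A.Nonempty := by
    have h1 : ∀ᶠ u in Filter.atTop, t < ρ u := hρ_lim.eventually (eventually_gt_nhds ht1)
    obtain ⟨u, hu⟩ := (h1.and (Filter.eventually_ge_atTop (0 : ℝ))).exists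
    exact ⟨u, hu.2, hu.1⟩
  have hbdd : BddBelow A := ⟨0, fun x hx => hx.1⟩
  set r := sInf A with hr_def
  have hr0 : 0 ≤ r := le_csInf hA (fun x hx => hx.1)
  have h1 : {z : ℝ | t < ρ (z / s)} ⊆ {z : ℝ | s * r ≤ |z|} := by
    intro z hz
    simp only [Set.mem_setOf_eq] at hz
    have hz' : t < ρ (|z| / s) := by
      rwa [rho_abs hρ_even (z / s), abs_div, abs_of_pos hs] at hz
    have hmem : |z| / s ∈ A := ⟨div_nonneg (abs_nonneg z) hs.le, hz'⟩
    have hle : r ≤ |z| / s := csInf_le hbdd hmem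
    calc s * r = r * s := mul_comm _ _
      _ ≤ |z| := (le_div_iff₀ hs).mp hle
  have h2 : {z : ℝ | s * r < |z - c|} ⊆ {z : ℝ | t < ρ ((z - c) / s)} := by
    intro z hz
    have hz' : r < |z - c| / s := by
      rw [lt_div_iff₀ hs]
      calc r * s = s * r := mul_comm _ _
        _ < |z - c| := hz
    obtain ⟨u, huA, hu⟩ := exists_lt_of_csInf_lt hA hz'
    have hle : ρ u ≤ ρ ((z - c) / s) := by
      rw [rho_abs hρ_even ((z - c) / s), abs_div, abs_of_pos hs]
      exact hρ_mono huA.1 (div_nonneg (abs_nonneg _) hs.le) hu.le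
    exact lt_of_lt_of_le huA.2 hle
  have e1 : {z : ℝ | s * r ≤ |z|} = (Set.Ioo (-(s * r)) (s * r))ᶜ := by
    ext z
    simp only [Set.mem_setOf_eq, Set.mem_compl_iff, Set.mem_Ioo, ← abs_lt, not_lt]
  have e2 : {z : ℝ | s * r < |z - c|} = (Set.Icc (c - s * r) (c + s * r))ᶜ := by
    ext z
    have hiff : (c - s * r ≤ z ∧ z ≤ c + s * r) ↔ |z - c| ≤ s * r := by
      rw [abs_le]; constructor <;> (intro h; constructor <;> linarith [h.1, h.2])
    simp only [Set.mem_setOf_eq, Set.mem_compl_iff, Set.mem_Icc, hiff, not_le]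
  have hIccIoo : μ0 (Set.Icc (c - s * r) (c + s * r)) ≤ μ0 (Set.Ioo (-(s * r)) (s * r)) := by
    have := gauss_interval (s * r) c (by positivity)
    simpa using this
  calc μ0 {z | t < ρ (z / s)} ≤ μ0 {z : ℝ | s * r ≤ |z|} := measure_mono h1
    _ = μ0 univ - μ0 (Set.Ioo (-(s * r)) (s * r)) := by
        rw [e1, measure_compl measurableSet_Ioo (measure_ne_top _ _)]
    _ ≤ μ0 univ - μ0 (Set.Icc (c - s * r) (c + s * r)) := tsub_le_tsub_left hIccIoo _
    _ = μ0 {z : ℝ | s * r < |z - c|} := by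
        rw [e2, measure_compl measurableSet_Icc (measure_ne_top _ _)]
    _ ≤ μ0 {z | t < ρ ((z - c) / s)} := measure_mono h2

end RhoLemmas
lemma shift_ge {ρ : ℝ → ℝ} (hρ_meas : Measurable ρ) (hρ_even : ∀ u, ρ (-u) = ρ u)
    (hρ_mono : MonotoneOn ρ (Set.Ici 0)) (hρ_bdd : ∀ u, 0 ≤ ρ u ∧ ρ u ≤ 1)
    (hρ_lim : Filter.Tendsto ρ Filter.atTop (nhds 1))
    (s c : ℝ) (hs : 0 < s) :
    ∫ z, ρ (z / s) ∂(gaussianReal 0 1) ≤ ∫ z, ρ ((z - c) / s) ∂(gaussianReal 0 1) := by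
  set μ0 := gaussianReal 0 1 with hμ0
  have m1 : Measurable fun z : ℝ => ρ (z / s) := hρ_meas.comp (measurable_id.div_const s)
  have m2 : Measurable fun z : ℝ => ρ ((z - c) / s) :=
    hρ_meas.comp ((measurable_id.sub_const c).div_const s)
  rw [integral_eq_lintegral_of_nonneg_ae (ae_of_all _ fun z => (hρ_bdd (z / s)).1)
        m1.aestronglyMeasurable,
      integral_eq_lintegral_of_nonneg_ae (ae_of_all _ fun z => (hρ_bdd ((z - c) / s)).1)
        m2.aestronglyMeasurable]
  have hfin : ∫⁻ z, ENNReal.ofReal (ρ ((z - c) / s)) ∂μ0 ≤ 1 := by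
    calc ∫⁻ z, ENNReal.ofReal (ρ ((z - c) / s)) ∂μ0 ≤ ∫⁻ _, 1 ∂μ0 :=
        lintegral_mono fun z => ENNReal.ofReal_le_one.mpr (hρ_bdd _).2
      _ = 1 := by simp
  apply ENNReal.toReal_mono (ne_top_of_le_ne_top ENNReal.one_ne_top hfin)
  rw [lintegral_eq_lintegral_meas_lt μ0 (ae_of_all _ fun z => (hρ_bdd (z / s)).1) m1.aemeasurable,
      lintegral_eq_lintegral_meas_lt μ0 (ae_of_all _ fun z => (hρ_bdd ((z - c) / s)).1)
        m2.aemeasurable]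
  apply lintegral_mono_ae
  apply ae_restrict_of_forall_mem measurableSet_Ioi
  intro t ht
  rcases lt_or_ge t 1 with ht1 | ht1
  · exact levelset_le hρ_even hρ_mono hρ_lim s c t hs ht1
  · have he : {z : ℝ | t < ρ (z / s)} = ∅ := by
      ext z
      simp only [Set.mem_setOf_eq, Set.mem_empty_iff_false, iff_false, not_lt]
      exact le_trans (hρ_bdd _).2 ht1
    simp [he]

lemma scale_ae {P : ℝ → Prop} (c : ℝ) (hc : c ≠ 0)
    (h : ∀ᵐ z ∂(volume : Measure ℝ), P z) : ∀ᵐ u ∂(volume : Measure ℝ), P (c * u) := by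
  rw [ae_iff] at h ⊢
  have heq : {u : ℝ | ¬P (c * u)} = (c * ·) ⁻¹' {z | ¬P z} := rfl
  rw [heq, Real.volume_preimage_mul_left hc, h, mul_zero]

lemma bounded_integrable {X : Type*} [MeasurableSpace X] (ν : Measure X) [IsFiniteMeasure ν]
    {f : X → ℝ} (hf : Measurable f) (h0 : ∀ x, 0 ≤ f x) (h1 : ∀ x, f x ≤ 1) :
    Integrable f ν := by
  refine Integrable.mono' (integrable_const (1 : ℝ)) hf.aestronglyMeasurable ?_
  exact ae_of_all _ fun x => by rw [Real.norm_eq_abs, abs_of_nonneg (h0 x)]; exact h1 x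
lemma rho_ae_one {ρ : ℝ → ℝ} (hρ_meas : Measurable ρ) (hρ_even : ∀ u, ρ (-u) = ρ u)
    (hρ_mono : MonotoneOn ρ (Set.Ici 0)) (hρ_bdd : ∀ u, 0 ≤ ρ u ∧ ρ u ≤ 1)
    (hρ_lim : Filter.Tendsto ρ Filter.atTop (nhds 1))
    {s s' : ℝ} (hs : 0 < s) (hss : s < s')
    (heq : ∫ z, ρ (z / s) ∂(gaussianReal 0 1) = ∫ z, ρ (z / s') ∂(gaussianReal 0 1)) :
    ∀ σ : ℝ, 0 < σ → ∫ z, ρ (z / σ) ∂(gaussianReal 0 1) = 1 := by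
  set μ0 := gaussianReal 0 1 with hμ0
  have hs' : 0 < s' := hs.trans hss
  have hint1 : Integrable (fun z : ℝ => ρ (z / s)) μ0 :=
    bounded_integrable μ0 (hρ_meas.comp (measurable_id.div_const s))
      (fun z => (hρ_bdd _).1) (fun z => (hρ_bdd _).2)
  have hint2 : Integrable (fun z : ℝ => ρ (z / s')) μ0 :=
    bounded_integrable μ0 (hρ_meas.comp (measurable_id.div_const s'))
      (fun z => (hρ_bdd _).1) (fun z => (hρ_bdd _).2)
  have hnn : 0 ≤ᵐ[μ0] fun z : ℝ => ρ (z / s) - ρ (z / s') := by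
    refine ae_of_all _ fun z => sub_nonneg.mpr (rho_le hρ_even hρ_mono ?_)
    rw [abs_div, abs_div, abs_of_pos hs, abs_of_pos hs']
    gcongr
  have hzero : ∫ z, (ρ (z / s) - ρ (z / s')) ∂μ0 = 0 := by
    rw [integral_sub hint1 hint2, heq, sub_self]
  have hae : (fun z : ℝ => ρ (z / s) - ρ (z / s')) =ᵐ[μ0] 0 :=
    (integral_eq_zero_iff_of_nonneg_ae hnn (hint1.sub hint2)).mp hzero
  have hvol : ∀ᵐ z ∂(volume : Measure ℝ), ρ (z / s) = ρ (z / s') := by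
    have h1 : ∀ᵐ z ∂μ0, ρ (z / s) = ρ (z / s') := by
      filter_upwards [hae] with z hz
      have : ρ (z / s) - ρ (z / s') = 0 := hz
      linarith
    exact h1.filter_mono (gaussianReal_absolutelyContinuous' 0 one_ne_zero).ae_le
  set κ := s' / s with hκ_def
  have hκ : 1 < κ := (one_lt_div hs).mpr hss
  have hκ0 : κ ≠ 0 := by positivity
  have key : ∀ᵐ u ∂(volume : Measure ℝ), ∀ n : ℕ, ρ (κ ^ n * u / s) = ρ (κ ^ n * u / s') :=
    ae_all_iff.mpr fun n => scale_ae (κ ^ n) (pow_ne_zero n hκ0) hvol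
  have hone : ∀ᵐ u ∂(volume : Measure ℝ), 0 < u → ρ (u / s) = 1 := by
    filter_upwards [key] with u hu hupos
    have hiter : ∀ n : ℕ, ρ (κ ^ n * u / s) = ρ (u / s) := by
      intro n
      induction n with
      | zero => simp
      | succ n ih =>
        have h1 : κ ^ (n + 1) * u / s' = κ ^ n * u / s := by
          rw [hκ_def, div_pow, div_pow]; field_simp; ring
        rw [hu (n + 1), h1, ih]
    have hlim : Filter.Tendsto (fun n : ℕ => κ ^ n * u / s) Filter.atTop Filter.atTop := by
      apply Filter.Tendsto.atTop_div_const hs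
      exact (tendsto_pow_atTop_atTop_of_one_lt hκ).atTop_mul_const hupos
    have h2 : Filter.Tendsto (fun n : ℕ => ρ (κ ^ n * u / s)) Filter.atTop (nhds 1) :=
      hρ_lim.comp hlim
    simp only [hiter] at h2
    exact (tendsto_nhds_unique h2 tendsto_const_nhds).symm
  intro σ hσ
  have hpos : ∀ᵐ z ∂(volume : Measure ℝ), 0 < z → ρ (z / σ) = 1 := by
    have := scale_ae (s / σ) (by positivity) hone
    filter_upwards [this] with z hz hzpos
    have harg : s / σ * z / s = z / σ := by field_simp
    have := hz (by positivity)
    rwa [harg] at this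
  have hneg : ∀ᵐ z ∂(volume : Measure ℝ), z < 0 → ρ (z / σ) = 1 := by
    have := scale_ae (-(s / σ)) (neg_ne_zero.mpr (by positivity)) hone
    filter_upwards [this] with z hz hzneg
    have hp : 0 < -(s / σ) * z := by
      have hd : 0 < s / σ := by positivity
      nlinarith
    have harg : -(s / σ) * z / s = -(z / σ) := by field_simp
    have h3 := hz hp
    rw [harg, hρ_even] at h3
    exact h3
  have hne : ∀ᵐ z ∂(volume : Measure ℝ), z ≠ 0 := by
    rw [ae_iff]
    have : {z : ℝ | ¬z ≠ 0} = {0} := by ext z; simp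
    rw [this, Real.volume_singleton]
  have hμae : ∀ᵐ z ∂μ0, ρ (z / σ) = 1 := by
    have hv : ∀ᵐ z ∂(volume : Measure ℝ), ρ (z / σ) = 1 := by
      filter_upwards [hpos, hneg, hne] with z h1 h2 h3
      rcases h3.lt_or_gt with h | h
      · exact h2 h
      · exact h1 h
    exact hv.filter_mono (gaussianReal_absolutelyContinuous 0 one_ne_zero).ae_le
  calc ∫ z, ρ (z / σ) ∂μ0 = ∫ _, (1 : ℝ) ∂μ0 := integral_congr_ae hμae
    _ = 1 := by simp
/-- Under the Gaussian model, for any H ∈ V_ε the S-scale σ_S(H) satisfies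
γ_{b,ε} ≤ σ_S(H) ≤ σ_{b,ε}. -/
theorem stmt2 (p : ℕ) (hp : 1 ≤ p) (ρ : ℝ → ℝ)
    (hρ_meas : Measurable ρ)
    (hρ_even : ∀ u, ρ (-u) = ρ u)
    (hρ_mono : MonotoneOn ρ (Set.Ici 0))
    (hρ_zero : ρ 0 = 0)
    (hρ_bdd : ∀ u, 0 ≤ ρ u ∧ ρ u ≤ 1)
    (hρ_lim : Tendsto ρ atTop (nhds 1))
    (g : ℝ → ℝ)
    (hg : ∀ s, 0 < s → g s = ∫ z, ρ (z / s) ∂(gaussianReal 0 1))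
    (b ε : ℝ) (hε : 0 < ε) (hεb : ε < b) (hb : b < 1)
    (σbε γbε : ℝ) (hσ_pos : 0 < σbε) (hγ_pos : 0 < γbε)
    (hσ : g σbε = (b - ε) / (1 - ε)) (hγ : g γbε = b / (1 - ε))
    (Hstar : Measure (ℝ × (Fin p → ℝ))) (hHstar : IsProbabilityMeasure Hstar)
    (H : Measure (ℝ × (Fin p → ℝ)))
    (hH : H = ENNReal.ofReal (1 - ε) •
        ((gaussianReal 0 1).prod (Measure.pi fun _ : Fin p => gaussianReal 0 1)) +
        ENNReal.ofReal ε • Hstar)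
    (σS : ℝ)
    (hσS : σS = sInf {σ : ℝ | 0 < σ ∧ ∃ α : ℝ, ∃ θ : Fin p → ℝ,
        ∫ yx, ρ ((yx.1 - α - ∑ i, θ i * yx.2 i) / σ) ∂H ≤ b}) :
    γbε ≤ σS ∧ σS ≤ σbε := by
  have hε1 : ε < 1 := hεb.trans hb
  have h1ε : (0 : ℝ) < 1 - ε := by linarith
  set μ0 : Measure ℝ := gaussianReal 0 1 with hμ0
  set ν : Measure (Fin p → ℝ) := Measure.pi fun _ : Fin p => gaussianReal 0 1 with hν
  set H0 : Measure (ℝ × (Fin p → ℝ)) := μ0.prod ν with hH0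
  have hmeas : ∀ (σ α : ℝ) (θ : Fin p → ℝ),
      Measurable fun yx : ℝ × (Fin p → ℝ) => ρ ((yx.1 - α - ∑ i, θ i * yx.2 i) / σ) := by
    intro σ α θ
    apply hρ_meas.comp
    apply Measurable.div_const
    apply Measurable.sub
    · exact measurable_fst.sub measurable_const
    · exact Finset.measurable_sum _ fun i _ =>
        Measurable.const_mul (f := fun x : ℝ × (Fin p → ℝ) => x.2 i) ((measurable_pi_apply i).comp measurable_snd) (θ i)
  have hdecomp : ∀ f : ℝ × (Fin p → ℝ) → ℝ, Measurable f → (∀ z, 0 ≤ f z) → (∀ z, f z ≤ 1) →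
      ∫ z, f z ∂H = (1 - ε) * ∫ z, f z ∂H0 + ε * ∫ z, f z ∂Hstar := by
    intro f hf h0 h1
    have hi0 : Integrable f H0 := bounded_integrable _ hf h0 h1
    have hi1 : Integrable f Hstar := bounded_integrable _ hf h0 h1
    rw [hH, integral_add_measure (hi0.smul_measure ENNReal.ofReal_ne_top)
        (hi1.smul_measure ENNReal.ofReal_ne_top),
      integral_smul_measure, integral_smul_measure,
      ENNReal.toReal_ofReal (by linarith : (0:ℝ) ≤ 1 - ε), ENNReal.toReal_ofReal hε.le]
    simp [smul_eq_mul]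
  -- membership of σbε
  have hmemb : σbε ∈ {σ : ℝ | 0 < σ ∧ ∃ α : ℝ, ∃ θ : Fin p → ℝ,
      ∫ yx, ρ ((yx.1 - α - ∑ i, θ i * yx.2 i) / σ) ∂H ≤ b} := by
    refine ⟨hσ_pos, 0, fun _ => 0, ?_⟩
    have hfe : (fun yx : ℝ × (Fin p → ℝ) =>
        ρ ((yx.1 - 0 - ∑ i, (fun _ : Fin p => (0:ℝ)) i * yx.2 i) / σbε))
        = fun yx => ρ (yx.1 / σbε) := by
      funext yx; norm_num
    rw [show (∫ yx, ρ ((yx.1 - 0 - ∑ i, (fun _ : Fin p => (0:ℝ)) i * yx.2 i) / σbε) ∂H)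
        = ∫ yx : ℝ × (Fin p → ℝ), ρ (yx.1 / σbε) ∂H from by rw [hfe]]
    have hm : Measurable fun yx : ℝ × (Fin p → ℝ) => ρ (yx.1 / σbε) :=
      hρ_meas.comp (measurable_fst.div_const σbε)
    have h0 : ∀ z : ℝ × (Fin p → ℝ), 0 ≤ ρ (z.1 / σbε) := fun z => (hρ_bdd _).1
    have h1 : ∀ z : ℝ × (Fin p → ℝ), ρ (z.1 / σbε) ≤ 1 := fun z => (hρ_bdd _).2
    rw [hdecomp _ hm h0 h1]
    have hi0 : Integrable (fun yx : ℝ × (Fin p → ℝ) => ρ (yx.1 / σbε)) H0 :=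
      bounded_integrable _ hm h0 h1
    have hH0int : ∫ z : ℝ × (Fin p → ℝ), ρ (z.1 / σbε) ∂H0 = g σbε := by
      rw [hH0, integral_prod_symm _ hi0]
      dsimp only
      simp only [integral_const, measure_univ, probReal_univ, ENNReal.toReal_one, one_smul]
      exact (hg σbε hσ_pos).symm
    have hstarle : ∫ z : ℝ × (Fin p → ℝ), ρ (z.1 / σbε) ∂Hstar ≤ 1 := by
      calc ∫ z : ℝ × (Fin p → ℝ), ρ (z.1 / σbε) ∂Hstar ≤ ∫ _, (1:ℝ) ∂Hstar :=
          integral_mono (bounded_integrable _ hm h0 h1) (integrable_const 1) h1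
        _ = 1 := by simp
    rw [hH0int, hσ]
    have hcanc : (1 - ε) * ((b - ε) / (1 - ε)) = b - ε := by field_simp
    have hεs : ε * ∫ z : ℝ × (Fin p → ℝ), ρ (z.1 / σbε) ∂Hstar ≤ ε * 1 :=
      mul_le_mul_of_nonneg_left hstarle hε.le
    linarith
  -- lower bound for every element of the set
  have hlb : ∀ σ ∈ {σ : ℝ | 0 < σ ∧ ∃ α : ℝ, ∃ θ : Fin p → ℝ,
      ∫ yx, ρ ((yx.1 - α - ∑ i, θ i * yx.2 i) / σ) ∂H ≤ b}, γbε ≤ σ := by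
    rintro σ ⟨hσpos, α, θ, hble⟩
    by_contra hcon
    push_neg at hcon
    have hm := hmeas σ α θ
    have h0 : ∀ z : ℝ × (Fin p → ℝ), 0 ≤ ρ ((z.1 - α - ∑ i, θ i * z.2 i) / σ) :=
      fun z => (hρ_bdd _).1
    have h1 : ∀ z : ℝ × (Fin p → ℝ), ρ ((z.1 - α - ∑ i, θ i * z.2 i) / σ) ≤ 1 :=
      fun z => (hρ_bdd _).2
    rw [hdecomp _ hm h0 h1] at hble
    have hstar0 : 0 ≤ ∫ z, ρ ((z.1 - α - ∑ i, θ i * z.2 i) / σ) ∂Hstar :=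
      integral_nonneg h0
    have hI0le : (1 - ε) * ∫ z, ρ ((z.1 - α - ∑ i, θ i * z.2 i) / σ) ∂H0 ≤ b := by
      nlinarith
    have hi0 : Integrable (fun z : ℝ × (Fin p → ℝ) =>
        ρ ((z.1 - α - ∑ i, θ i * z.2 i) / σ)) H0 := bounded_integrable _ hm h0 h1
    have hfub : ∫ z, ρ ((z.1 - α - ∑ i, θ i * z.2 i) / σ) ∂H0
        = ∫ x, (∫ y, ρ ((y - α - ∑ i, θ i * x i) / σ) ∂μ0) ∂ν := by
      rw [hH0, integral_prod_symm _ hi0]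
    have hinner_ge : ∀ x : Fin p → ℝ, g σ ≤ ∫ y, ρ ((y - α - ∑ i, θ i * x i) / σ) ∂μ0 := by
      intro x
      have hrw : ∀ y : ℝ, y - α - ∑ i, θ i * x i = y - (α + ∑ i, θ i * x i) :=
        fun y => by ring
      simp_rw [hrw]
      rw [hg σ hσpos]
      exact shift_ge hρ_meas hρ_even hρ_mono hρ_bdd hρ_lim σ (α + ∑ i, θ i * x i) hσpos
    have hinner_meas : Measurable fun x : Fin p → ℝ =>
        ∫ y, ρ ((y - α - ∑ i, θ i * x i) / σ) ∂μ0 := by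
      have := (hm.stronglyMeasurable).integral_prod_left' (μ := μ0)
      exact this.measurable
    have hinner_int : Integrable (fun x : Fin p → ℝ =>
        ∫ y, ρ ((y - α - ∑ i, θ i * x i) / σ) ∂μ0) ν := by
      refine bounded_integrable _ hinner_meas (fun x => integral_nonneg fun y => (hρ_bdd _).1) ?_
      intro x
      calc ∫ y, ρ ((y - α - ∑ i, θ i * x i) / σ) ∂μ0 ≤ ∫ _, (1:ℝ) ∂μ0 := by
            refine integral_mono ?_ (integrable_const 1) (fun y => (hρ_bdd _).2)
            exact bounded_integrable _ (hρ_meas.comp (((measurable_id.sub_const α).sub_const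
              _).div_const σ)) (fun y => (hρ_bdd _).1) (fun y => (hρ_bdd _).2)
        _ = 1 := by simp
    have hgI0 : g σ ≤ ∫ z, ρ ((z.1 - α - ∑ i, θ i * z.2 i) / σ) ∂H0 := by
      rw [hfub]
      calc g σ = ∫ _, g σ ∂ν := by simp
        _ ≤ _ := integral_mono (integrable_const _) hinner_int hinner_ge
    have hgle : g σ ≤ g γbε := by
      have h2 : (1 - ε) * g σ ≤ b := le_trans (mul_le_mul_of_nonneg_left hgI0 h1ε.le) hI0le
      have h3 : b = (1 - ε) * g γbε := by rw [hγ]; field_simp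
      have := h2.trans_eq h3
      exact le_of_mul_le_mul_left (by linarith) h1ε
    have hgge : g γbε ≤ g σ := by
      rw [hg σ hσpos, hg γbε hγ_pos]
      refine integral_mono (bounded_integrable _ (hρ_meas.comp (measurable_id.div_const γbε))
          (fun z => (hρ_bdd _).1) (fun z => (hρ_bdd _).2))
        (bounded_integrable _ (hρ_meas.comp (measurable_id.div_const σ))
          (fun z => (hρ_bdd _).1) (fun z => (hρ_bdd _).2)) ?_
      intro z
      refine rho_le hρ_even hρ_mono ?_
      rw [abs_div, abs_div, abs_of_pos hγ_pos, abs_of_pos hσpos]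
      gcongr
    have heq : ∫ z, ρ (z / σ) ∂μ0 = ∫ z, ρ (z / γbε) ∂μ0 := by
      rw [← hg σ hσpos, ← hg γbε hγ_pos]
      exact le_antisymm hgle hgge
    have hone := rho_ae_one hρ_meas hρ_even hρ_mono hρ_bdd hρ_lim hσpos hcon heq σbε hσ_pos
    rw [← hg σbε hσ_pos, hσ] at hone
    have : b - ε = 1 - ε := by
      field_simp at hone
      linarith
    linarith
  constructor
  · rw [hσS]
    exact le_csInf ⟨σbε, hmemb⟩ hlb
  · rw [hσS]
    exact csInf_le ⟨0, fun x hx => hx.1.le⟩ hmemb
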